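/- The trace group of the category of finite-dimensional vector spaces over a field 𝔽 (with all linear maps as morphisms) is isomorphic to 𝔽, generated by the class of the identity on a one-dimensional space, and the isomorphism is induced by the ordinary trace of linear endomorphisms. -/

import Mathlib

open CategoryTheory
open scoped DirectSum

attribute [local instance] Classical.propDecidable

variable (F : Type) [Field F]

/-- The direct sum of the endomorphism groups of all finite-dimensional `F`-vector
spaces. -/
abbrev FdVecEnd : Type 1 := ⨁ M : FGModuleCat F, (M ⟶ M)

/-- The subgroup generated by the trace relations `fg − gf` for `f : M₁ ⟶ M₂`
and `g : M₂ ⟶ M₁`. -/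
def fdVecTraceRelations : AddSubgroup (FdVecEnd F) :=
  AddSubgroup.closure
    {x | ∃ (M₁ M₂ : FGModuleCat F) (f : M₁ ⟶ M₂) (g : M₂ ⟶ M₁),
      x = DirectSum.of (fun M : FGModuleCat F => M ⟶ M) M₁ (f ≫ g)
        - DirectSum.of (fun M : FGModuleCat F => M ⟶ M) M₂ (g ≫ f)}

noncomputable abbrev ofE (M : FGModuleCat F) (f : M ⟶ M) : FdVecEnd F :=
  DirectSum.of (fun M : FGModuleCat F => M ⟶ M) M f

noncomputable def hmA (M N : FGModuleCat F) : (M →ₗ[F] N) →+ (M ⟶ N) :=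
  AddMonoidHom.mk' (fun g => ObjectProperty.homMk (ModuleCat.ofHom g)) (fun _ _ => rfl)

lemma hmA_hom (M N : FGModuleCat F) (g : M →ₗ[F] N) : (hmA F M N g).hom.hom = g := rfl

noncomputable def totalTr : FdVecEnd F →+ F :=
  DirectSum.toAddMonoid (fun M => (LinearMap.trace F M).toAddMonoidHom.comp
    (AddMonoidHom.mk' (fun f : M ⟶ M => f.hom.hom) (fun _ _ => rfl)))

lemma totalTr_of (M : FGModuleCat F) (f : M ⟶ M) :
    totalTr F (ofE F M f) = LinearMap.trace F M f.hom.hom :=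
  DirectSum.toAddMonoid_of _ _ _

lemma relations_le_ker : fdVecTraceRelations F ≤ (totalTr F).ker := by
  rw [fdVecTraceRelations, AddSubgroup.closure_le]
  rintro x ⟨M₁, M₂, f, g, rfl⟩
  haveI : Module.Finite F M₁.obj := M₁.property
  haveI : Module.Finite F M₂.obj := M₂.property
  simp only [SetLike.mem_coe, AddMonoidHom.mem_ker, map_sub, totalTr_of]
  refine sub_eq_zero.mpr ?_
  exact (LinearMap.trace_comp_comm' f.hom.hom g.hom.hom)

noncomputable def eHom : (FdVecEnd F ⧸ fdVecTraceRelations F) →+ F :=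
  QuotientAddGroup.lift _ (totalTr F) (relations_le_ker F)

lemma eHom_mk (x : FdVecEnd F) : eHom F (QuotientAddGroup.mk x) = totalTr F x := rfl

abbrev unitF : FGModuleCat F := FGModuleCat.of F F

noncomputable def sHom : F →+ (FdVecEnd F ⧸ fdVecTraceRelations F) :=
  ((QuotientAddGroup.mk' (fdVecTraceRelations F)).comp
      (DirectSum.of (fun M : FGModuleCat F => M ⟶ M) (unitF F))).comp
    ((hmA F (unitF F) (unitF F)).comp (LinearMap.toSpanSingleton F (F →ₗ[F] F) LinearMap.id).toAddMonoidHom)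

lemma sHom_apply (c : F) :
    sHom F c = QuotientAddGroup.mk (ofE F (unitF F) (hmA F _ _ (c • LinearMap.id))) := rfl

lemma trace_smul_id (c : F) :
    LinearMap.trace F (unitF F) (c • LinearMap.id) = c := by
  rw [map_smul, LinearMap.trace_id]
  have : Module.finrank F (unitF F) = 1 := Module.finrank_self F
  rw [this]
  simp

lemma aux_comp (M : FGModuleCat F) (φ : M →ₗ[F] F) (v : M) :
    φ.comp (LinearMap.toSpanSingleton F M v) = φ v • (LinearMap.id : F →ₗ[F] F) := by
  refine LinearMap.ext fun c => ?_
  rw [LinearMap.smul_apply, LinearMap.id_apply, LinearMap.comp_apply,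
    LinearMap.toSpanSingleton_apply, map_smul, smul_eq_mul, smul_eq_mul, mul_comm]

lemma mk_smulRight (M : FGModuleCat F) (φ : M →ₗ[F] F) (v : M) :
    (QuotientAddGroup.mk (ofE F M (hmA F M M (φ.smulRight v))) :
        FdVecEnd F ⧸ fdVecTraceRelations F)
      = QuotientAddGroup.mk (ofE F (unitF F) (hmA F _ _ (φ v • LinearMap.id))) := by
  rw [QuotientAddGroup.eq]
  have hgen : ofE F M (hmA F M M (φ.smulRight v)) - ofE F (unitF F) (hmA F _ _ (φ v • LinearMap.id))
      ∈ fdVecTraceRelations F := by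
    apply AddSubgroup.subset_closure
    refine ⟨M, unitF F, hmA F M (unitF F) φ, hmA F (unitF F) M (LinearMap.toSpanSingleton F M v), ?_⟩
    congr 1
    all_goals congr 1
    all_goals first
      | exact LinearMap.ext fun c => rfl
      | exact congrArg (hmA F (unitF F) (unitF F)) (aux_comp F M φ v).symm
  have hx : -(ofE F M (hmA F M M (φ.smulRight v))) + ofE F (unitF F) (hmA F _ _ (φ v • LinearMap.id))
      = -(ofE F M (hmA F M M (φ.smulRight v)) - ofE F (unitF F) (hmA F _ _ (φ v • LinearMap.id))) := by abel
  rw [hx]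
  exact neg_mem hgen

lemma key (M : FGModuleCat F) (f : M ⟶ M) :
    (QuotientAddGroup.mk (ofE F M f) : FdVecEnd F ⧸ fdVecTraceRelations F)
      = sHom F (LinearMap.trace F M f.hom.hom) := by
  classical
  let b := Module.finBasis F M
  have hdec : f.hom.hom
      = ∑ i, (((b.coord i) ∘ₗ f.hom.hom).smulRight (b i)) := by
    refine LinearMap.ext fun x => ?_
    refine ((Module.Basis.sum_repr b (f x)).symm).trans ?_
    refine Eq.trans ?_ (LinearMap.sum_apply _ _ _).symm
    exact Finset.sum_congr rfl fun i _ => rfl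
  have hof : ofE F M f
      = ∑ i, ofE F M (hmA F M M (((b.coord i) ∘ₗ f.hom.hom).smulRight (b i))) := by
    rw [show f = hmA F M M f.hom.hom from rfl]
    conv_lhs => rw [hdec]
    exact map_sum ((DirectSum.of (fun M : FGModuleCat F => M ⟶ M) M).comp (hmA F M M)) _ _
  set c : F := ∑ i, ((b.coord i) ∘ₗ f.hom.hom) (b i) with hc
  have h1 : (QuotientAddGroup.mk (ofE F M f) : FdVecEnd F ⧸ fdVecTraceRelations F)
      = QuotientAddGroup.mk (ofE F (unitF F) (hmA F _ _ (c • LinearMap.id))) := by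
    have hsum2 : ofE F (unitF F) (hmA F _ _ (c • LinearMap.id))
        = ∑ i, ofE F (unitF F) (hmA F _ _ ((((b.coord i) ∘ₗ f.hom.hom) (b i)) • LinearMap.id)) := by
      rw [hc]
      rw [show ((∑ i, ((b.coord i) ∘ₗ f.hom.hom) (b i)) • (LinearMap.id : F →ₗ[F] F))
          = ∑ i, (((b.coord i) ∘ₗ f.hom.hom) (b i)) • (LinearMap.id : F →ₗ[F] F)
        from Finset.sum_smul]
      exact map_sum ((DirectSum.of (fun M : FGModuleCat F => M ⟶ M) (unitF F)).comp (hmA F _ _)) _ _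
    calc (QuotientAddGroup.mk (ofE F M f) : FdVecEnd F ⧸ fdVecTraceRelations F)
        = ∑ i, QuotientAddGroup.mk
            (ofE F M (hmA F M M (((b.coord i) ∘ₗ f.hom.hom).smulRight (b i)))) := by
          rw [hof]
          exact map_sum (QuotientAddGroup.mk' (fdVecTraceRelations F)) _ _
      _ = ∑ i, QuotientAddGroup.mk
            (ofE F (unitF F) (hmA F _ _ ((((b.coord i) ∘ₗ f.hom.hom) (b i)) • LinearMap.id))) :=
          Finset.sum_congr rfl fun i _ => mk_smulRight F M _ _
      _ = QuotientAddGroup.mk (ofE F (unitF F) (hmA F _ _ (c • LinearMap.id))) := by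
          rw [hsum2]
          exact (map_sum (QuotientAddGroup.mk' (fdVecTraceRelations F)) _ _).symm
  have h2 : LinearMap.trace F M f.hom.hom = c := by
    have := congrArg (eHom F) h1
    rw [eHom_mk, eHom_mk, totalTr_of, totalTr_of, hmA_hom, trace_smul_id] at this
    exact this
  rw [h1, h2, sHom_apply]

/-- The trace group of the category of finite-dimensional `F`-vector spaces is
isomorphic to `F`, via the ordinary trace of linear endomorphisms; it is generated
by the class of the identity of the one-dimensional space `F`. -/
theorem trace_group_fdVec :
    ∃ e : (FdVecEnd F ⧸ fdVecTraceRelations F) ≃+ F,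
      (∀ (M : FGModuleCat F) (f : M ⟶ M),
        e (QuotientAddGroup.mk (DirectSum.of (fun M : FGModuleCat F => M ⟶ M) M f))
          = LinearMap.trace F M f.hom.hom) ∧
      e (QuotientAddGroup.mk (DirectSum.of (fun M : FGModuleCat F => M ⟶ M)
          (FGModuleCat.of F F) (𝟙 (FGModuleCat.of F F)))) = 1 := by
  have hsec : ∀ c : F, eHom F (sHom F c) = c := fun c => by
    rw [sHom_apply, eHom_mk, totalTr_of, hmA_hom, trace_smul_id]
  have hretr : ∀ q : FdVecEnd F ⧸ fdVecTraceRelations F, sHom F (eHom F q) = q := by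
    have hext : (sHom F).comp (eHom F) = AddMonoidHom.id _ := by
      refine QuotientAddGroup.addMonoidHom_ext _ ?_
      refine DirectSum.addHom_ext fun M f => ?_
      show sHom F (eHom F (QuotientAddGroup.mk (ofE F M f))) = QuotientAddGroup.mk (ofE F M f)
      rw [eHom_mk, totalTr_of]
      exact (key F M f).symm
    exact fun q => DFunLike.congr_fun hext q
  set e : (FdVecEnd F ⧸ fdVecTraceRelations F) ≃+ F :=
    AddEquiv.mk' ⟨eHom F, sHom F, hretr, hsec⟩ (map_add (eHom F)) with he
  have hco : ∀ q, e q = eHom F q := fun q => rfl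
  refine ⟨e, ?_, ?_⟩
  · intro M f
    rw [hco]
    exact (eHom_mk F _).trans (totalTr_of F M f)
  · rw [hco]
    show eHom F _ = 1
    rw [eHom_mk, totalTr_of]
    have h : (𝟙 (FGModuleCat.of F F) : FGModuleCat.of F F ⟶ _).hom.hom = (LinearMap.id : F →ₗ[F] F) := rfl
    rw [h, LinearMap.trace_id]
    have : Module.finrank F (unitF F) = 1 := Module.finrank_self F
    rw [this]
    simp
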